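/- Let ε be a primitive p-th root of unity with p odd, p > 1. For any integer n, write n = n₀ + p·n₁ with 0 ≤ n₀ < p. Then the balanced Gaussian binomial evaluated at ε satisfies [n choose p]_ε = n₁. -/

import Mathlib

noncomputable section

/-- The field `ℂ(q)` of rational functions. -/
abbrev Fq : Type := RatFunc ℂ

/-- The indeterminate `q`. -/
def q : Fq := RatFunc.X

/-- The balanced quantum integer `[n]_q = (q^n - q^{-n})/(q - q^{-1})`. -/
def qint (n : ℤ) : Fq := (q ^ n - q ^ (-n)) / (q - q⁻¹)

/-- The quantum factorial `[m]_q!`. -/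
def qfact : ℕ → Fq
  | 0 => 1
  | n + 1 => qint (n + 1) * qfact n

/-- The balanced Gaussian binomial coefficient `[n choose k]_q`,
with the convention that it is `0` for `k < 0`. -/
def qbinom (n k : ℤ) : Fq :=
  if k < 0 then 0
  else (∏ i ∈ Finset.range k.toNat, qint (n - i)) / qfact k.toNat

open Finset AddMonoidAlgebra

/-! ### Auxiliary development -/

/-- Generic evaluation ring hom on Laurent polynomials (as `AddMonoidAlgebra ℂ ℤ`). -/
def ev (K : Type) [Field K] [Algebra ℂ K] (u : Kˣ) : AddMonoidAlgebra ℂ ℤ →+* K :=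
  AddMonoidAlgebra.liftNCRingHom (algebraMap ℂ K)
    ((Units.coeHom K).comp (zpowersHom Kˣ u)) (fun _ _ => Commute.all _ _)

lemma ev_single (K : Type) [Field K] [Algebra ℂ K] (u : Kˣ) (i : ℤ) (a : ℂ) :
    ev K u (AddMonoidAlgebra.single i a) = algebraMap ℂ K a * (u : K) ^ i := by
  show AddMonoidAlgebra.liftNC _ _ (AddMonoidAlgebra.single i a) = _
  rw [AddMonoidAlgebra.liftNC_single]
  simp [zpowersHom_apply, Units.val_zpow_eq_zpow_val]

lemma ev_apply (K : Type) [Field K] [Algebra ℂ K] (u : Kˣ) (c : ℤ →₀ ℂ) :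
    ev K u (AddMonoidAlgebra.ofCoeff c) = c.sum fun i a => algebraMap ℂ K a * (u : K) ^ i := by
  conv_lhs => rw [← Finsupp.sum_single c, AddMonoidAlgebra.ofCoeff_finsuppSum]
  rw [map_finsuppSum]
  exact Finsupp.sum_congr fun i _ => ev_single K u i _

lemma zpow_sum_mul {K : Type} [Field K] {u : K} (hu : u ≠ 0) (t : ℤ) (m : ℕ) :
    (∑ j ∈ range m, u ^ (t * (2 * (j : ℤ) + 1 - m))) * (u ^ t - u ^ (-t))
      = u ^ (t * m) - u ^ (-(t * m)) := by
  have key : ∀ j ∈ range m, u ^ (t * (2 * (j : ℤ) + 1 - m)) * (u ^ t - u ^ (-t))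
      = u ^ (t * (2 * ((j : ℤ) + 1) - m)) - u ^ (t * (2 * (j : ℤ) - m)) := by
    intro j _
    rw [mul_sub, ← zpow_add₀ hu, ← zpow_add₀ hu]
    ring_nf
  rw [Finset.sum_mul, Finset.sum_congr rfl key]
  have := Finset.sum_range_sub (f := fun j : ℕ => u ^ (t * (2 * (j : ℤ) - m))) m
  push_cast at this ⊢
  rw [this, show t*(2*(m:ℤ)-m) = t*m by ring, show t*(0-(m:ℤ)) = -(t*m) by ring]

/-- Laurent-polynomial representative of `[m]` in the variable `q^t`, `m : ℕ`. -/
def lpN (t : ℤ) (m : ℕ) : AddMonoidAlgebra ℂ ℤ :=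
  ∑ j ∈ range m, AddMonoidAlgebra.single (t * (2 * (j : ℤ) + 1 - m)) 1

/-- Laurent-polynomial representative of `[m]` in the variable `q^t`, `m : ℤ`. -/
def lrep (t m : ℤ) : AddMonoidAlgebra ℂ ℤ :=
  if 0 ≤ m then lpN t m.toNat else -lpN t (-m).toNat

lemma ev_lpN (K : Type) [Field K] [Algebra ℂ K] (u : Kˣ) (t : ℤ) (m : ℕ) :
    ev K u (lpN t m) = ∑ j ∈ range m, (u : K) ^ (t * (2 * (j : ℤ) + 1 - m)) := by
  rw [lpN, map_sum]
  exact Finset.sum_congr rfl fun j _ => by rw [ev_single, map_one, one_mul]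

lemma ev_lrep_mul (K : Type) [Field K] [Algebra ℂ K] (u : Kˣ) (t m : ℤ) :
    ev K u (lrep t m) * ((u : K) ^ t - (u : K) ^ (-t))
      = (u : K) ^ (t * m) - (u : K) ^ (-(t * m)) := by
  have hu : (u : K) ≠ 0 := u.ne_zero
  rw [lrep]
  split_ifs with h
  · rw [ev_lpN, zpow_sum_mul hu, Int.toNat_of_nonneg h]
  · rw [map_neg, ev_lpN, neg_mul, zpow_sum_mul hu,
      Int.toNat_of_nonneg (by omega : (0:ℤ) ≤ -m),
      show t * -m = -(t*m) by ring, neg_neg, neg_sub]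

/-! ### Facts about `q` -/

lemma q_ne_zero : q ≠ 0 := RatFunc.X_ne_zero

lemma q_zpow_ne_one {m : ℤ} (hm : 0 < m) : q ^ m ≠ 1 := by
  intro h
  have h1 : q ^ m = q ^ m.toNat := by
    rw [← zpow_natCast, Int.toNat_of_nonneg hm.le]
  rw [h1, q, ← RatFunc.algebraMap_X (K := ℂ), ← map_pow] at h
  have h2 : (Polynomial.X : Polynomial ℂ) ^ m.toNat = 1 := by
    apply RatFunc.algebraMap_injective (K := ℂ)
    rw [h, map_one]
  have := congrArg (Polynomial.eval 0) h2
  simp [zero_pow (by omega : m.toNat ≠ 0)] at this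

lemma q_zpow_sub_ne_zero {m : ℤ} (hm : m ≠ 0) : q ^ m - q ^ (-m) ≠ 0 := by
  intro h
  have h1 : q ^ m = q ^ (-m) := sub_eq_zero.mp h
  have h2 : q ^ (2 * m) = 1 := by
    rw [two_mul, zpow_add₀ q_ne_zero]
    nth_rewrite 2 [h1]
    rw [← zpow_add₀ q_ne_zero, add_neg_cancel, zpow_zero]
  rcases lt_trichotomy m 0 with h3 | h3 | h3
  · have h4 : q ^ (2 * (-m)) = 1 := by
      rw [show 2 * (-m) = -(2*m) by ring, zpow_neg, h2, inv_one]
    exact q_zpow_ne_one (by omega) h4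
  · exact hm h3
  · exact q_zpow_ne_one (by omega) h2

lemma q_sub_inv_ne_zero : q - q⁻¹ ≠ 0 := by
  have := q_zpow_sub_ne_zero (m := 1) one_ne_zero
  rwa [zpow_one, zpow_neg, zpow_one] at this

lemma qint_mul (m : ℤ) : qint m * (q - q⁻¹) = q ^ m - q ^ (-m) :=
  div_mul_cancel₀ _ q_sub_inv_ne_zero

lemma qint_ne_zero {m : ℤ} (hm : m ≠ 0) : qint m ≠ 0 :=
  div_ne_zero (q_zpow_sub_ne_zero hm) q_sub_inv_ne_zero

/-- The unit `q` of `Fq`. -/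
def qu : Fqˣ := Units.mk0 q q_ne_zero

lemma qu_val : (qu : Fq) = q := rfl

lemma qint_eq_ev (m : ℤ) : qint m = ev Fq qu (lrep 1 m) := by
  apply mul_right_cancel₀ q_sub_inv_ne_zero
  rw [qint_mul]
  have := ev_lrep_mul Fq qu 1 m
  rw [qu_val, zpow_one, one_mul, zpow_neg, zpow_one] at this
  rw [this]

lemma qfact_eq (k : ℕ) : qfact k = ∏ j ∈ range k, qint (j + 1) := by
  induction k with
  | zero => simp [qfact]
  | succ n ih =>
    rw [qfact, ih, Finset.prod_range_succ, mul_comm]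

/-- Injectivity of evaluation at `q`. -/
lemma ev_q_injective : Function.Injective (ev Fq qu) := by
  rw [injective_iff_map_eq_zero]
  intro c hc0
  obtain ⟨c⟩ := c
  by_contra hne
  obtain ⟨i₀, hi₀⟩ := (Finsupp.support_nonempty_iff (f := c)).mpr (by rintro rfl; exact hne rfl)
  set N : ℕ := c.support.sup Int.natAbs with hN
  have hNb : ∀ i ∈ c.support, 0 ≤ i + N := by
    intro i hi
    have := Finset.le_sup (f := Int.natAbs) hi
    omega
  -- the polynomial `q^N * (ev c)`
  set P : Polynomial ℂ := c.sum fun i a => Polynomial.C a * Polynomial.X ^ (i + N).toNat with hP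
  have hmap : algebraMap (Polynomial ℂ) Fq P = ev Fq qu (AddMonoidAlgebra.ofCoeff c) * q ^ (N : ℤ) := by
    rw [hP, map_finsuppSum, ev_apply, Finsupp.sum_mul]
    apply Finsupp.sum_congr
    intro i hi
    rw [map_mul, map_pow, RatFunc.algebraMap_X,
      show (RatFunc.X : Fq) = q from rfl, qu_val,
      show algebraMap (Polynomial ℂ) Fq (Polynomial.C (c i)) = algebraMap ℂ Fq (c i) by
        rw [← Polynomial.algebraMap_eq, ← IsScalarTower.algebraMap_apply],
      mul_assoc, ← zpow_natCast q, ← zpow_add₀ q_ne_zero,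
      Int.toNat_of_nonneg (hNb i hi)]
  have hP0 : P = 0 := by
    apply RatFunc.algebraMap_injective (K := ℂ)
    rw [hmap, hc0, zero_mul, map_zero]
  have hcoeff : P.coeff (i₀ + N).toNat = c i₀ := by
    rw [hP, Finsupp.sum, Polynomial.finset_sum_coeff]
    rw [Finset.sum_eq_single i₀]
    · simp
    · intro i hi hne'
      have h1 : (i + N).toNat ≠ (i₀ + N).toNat := by
        have := hNb i hi; have := hNb i₀ hi₀; omega
      rw [Polynomial.coeff_C_mul, Polynomial.coeff_X_pow, if_neg (fun h => h1 h.symm), mul_zero]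
    · intro h; exact absurd hi₀ h
  rw [hP0] at hcoeff
  simp only [Polynomial.coeff_zero] at hcoeff
  exact (Finsupp.mem_support_iff.mp hi₀) hcoeff.symm

lemma int_dvd_eq_zero {p a : ℤ} (hp : 0 < p) (h1 : -p < a) (h2 : a < p) (hd : p ∣ a) : a = 0 := by
  obtain ⟨t, rfl⟩ := hd
  rcases lt_trichotomy t 0 with h | h | h
  · have : p * t ≤ p * (-1) := mul_le_mul_of_nonneg_left (by omega) hp.le
    linarith
  · simp [h]
  · have : p * 1 ≤ p * t := mul_le_mul_of_nonneg_left (by omega) hp.le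
    linarith

theorem qbinom_p_at_root_of_unity (p : ℕ) (hodd : Odd p) (hp : 1 < p)
    (ε : ℂ) (hε : IsPrimitiveRoot ε p) (n : ℤ) (c : ℤ →₀ ℂ)
    (hc : qbinom n p = c.sum fun i a => algebraMap ℂ Fq a * q ^ i) :
    (c.sum fun i a => a * ε ^ i) = ((n.ediv p : ℤ) : ℂ) := by
  have hp0 : (0:ℤ) < p := by exact_mod_cast Nat.lt_of_lt_of_le Nat.zero_lt_one hp.le
  have hε0 : ε ≠ 0 := hε.ne_zero (by omega)
  set εu : ℂˣ := Units.mk0 ε hε0 with hεu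
  have hεuv : (εu : ℂ) = ε := rfl
  set n₁ : ℤ := n / p with hn₁
  set n₀ : ℤ := n % p with hn₀
  have hdiv : (p:ℤ) * n₁ + n₀ = n := Int.mul_ediv_add_emod n p
  have h0le : 0 ≤ n₀ := Int.emod_nonneg n (by omega)
  have hlt : n₀ < p := Int.emod_lt_of_pos n hp0
  set k : ℕ := n₀.toNat with hk
  have hkk : (k:ℤ) = n₀ := Int.toNat_of_nonneg h0le
  have hkmem : k ∈ range p := mem_range.mpr (by omega)
  -- ε-side basic facts
  have hDmul : ∀ m : ℤ, ev ℂ εu (lrep 1 m) * (ε - ε⁻¹) = ε ^ m - ε ^ (-m) := by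
    intro m
    have := ev_lrep_mul ℂ εu 1 m
    rwa [hεuv, zpow_one, one_mul, zpow_neg, zpow_one] at this
  have heps_pow_sub : ∀ r : ℤ, 0 < r → r < p → ε ^ r - ε ^ (-r) ≠ 0 := by
    intro r h1 h2 h
    have h3 : ε ^ r = ε ^ (-r) := sub_eq_zero.mp h
    have h4 : ε ^ (2*r) = 1 := by
      rw [two_mul, zpow_add₀ hε0]
      nth_rewrite 2 [h3]
      rw [← zpow_add₀ hε0, add_neg_cancel, zpow_zero]
    have h5 : (p:ℤ) ∣ 2 * r := (hε.zpow_eq_one_iff_dvd _).mp h4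
    have h6 : (p:ℤ) ∣ r := by
      refine Int.dvd_of_dvd_mul_left_of_gcd_one (by rwa [mul_comm] at h5) ?_
      exact hodd.coprime_two_right
    have := Int.le_of_dvd h1 h6
    omega
  have heps_sub_ne : ε - ε⁻¹ ≠ 0 := by
    have := heps_pow_sub 1 one_pos (by exact_mod_cast hp)
    rwa [zpow_one, zpow_neg, zpow_one] at this
  have hD_ne : ∀ r : ℤ, 0 < r → r < p → ev ℂ εu (lrep 1 r) ≠ 0 := by
    intro r h1 h2 h
    have h3 := hDmul r
    rw [h, zero_mul] at h3
    exact heps_pow_sub r h1 h2 h3.symm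
  have hDcongr : ∀ m m' : ℤ, (p:ℤ) ∣ m - m' → ev ℂ εu (lrep 1 m) = ev ℂ εu (lrep 1 m') := by
    intro m m' hd
    apply mul_right_cancel₀ heps_sub_ne
    rw [hDmul, hDmul]
    have e1 : ε ^ m = ε ^ m' := by
      rw [show m = m' + (m - m') by ring, zpow_add₀ hε0,
        (hε.zpow_eq_one_iff_dvd _).mpr hd, mul_one]
    have e2 : ε ^ (-m) = ε ^ (-m') := by
      rw [show -m = -m' + -(m - m') by ring, zpow_add₀ hε0,
        (hε.zpow_eq_one_iff_dvd _).mpr (dvd_neg.mpr hd), mul_one]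
    rw [e1, e2]
  have hlrp : ev ℂ εu (lrep p n₁) = (n₁ : ℂ) := by
    have hN : ∀ m : ℕ, ev ℂ εu (lpN p m) = (m : ℂ) := by
      intro m
      rw [ev_lpN]
      have h1 : ∀ j ∈ range m, (εu : ℂ) ^ ((p:ℤ) * (2 * (j:ℤ) + 1 - m)) = 1 := by
        intro j _
        rw [hεuv]
        exact (hε.zpow_eq_one_iff_dvd _).mpr ⟨_, rfl⟩
      rw [Finset.sum_congr rfl h1, Finset.sum_const, nsmul_eq_mul, mul_one, card_range]
    rw [lrep]
    split_ifs with h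
    · rw [hN]
      have : ((n₁.toNat : ℤ) : ℂ) = ((n₁ : ℤ) : ℂ) := by rw [Int.toNat_of_nonneg h]
      push_cast at this ⊢
      exact this
    · rw [map_neg, hN]
      have h2 : (((-n₁).toNat : ℤ) : ℂ) = ((-n₁ : ℤ) : ℂ) := by
        rw [Int.toNat_of_nonneg (by omega)]
      push_cast at h2 ⊢
      rw [h2]
      ring
  -- Fq-side
  have hζ : qbinom n (p:ℤ) = (∏ i ∈ range p, qint (n - i)) / qfact p := by
    unfold qbinom
    rw [if_neg (by omega), Int.toNat_natCast]
  have hfacne : qfact p ≠ 0 := by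
    rw [qfact_eq]
    exact Finset.prod_ne_zero_iff.mpr fun j _ => qint_ne_zero (by omega)
  have hqp_ne : qint (p:ℤ) ≠ 0 := qint_ne_zero (by omega)
  have hprod : (∏ i ∈ range p, qint (n - i))
      = qint ((p:ℤ) * n₁) * ∏ i ∈ (range p).erase k, qint (n - i) := by
    rw [← Finset.mul_prod_erase (range p) (fun i => qint (n - i)) hkmem]
    congr 2
    linear_combination -hdiv - hkk
  have hqpn : qint ((p:ℤ) * n₁) = ev Fq qu (lrep p n₁) * qint (p:ℤ) := by
    apply mul_right_cancel₀ q_sub_inv_ne_zero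
    rw [qint_mul, mul_assoc, qint_mul]
    have := ev_lrep_mul Fq qu p n₁
    rw [qu_val] at this
    rw [this]
  have hfact2 : qfact p = qint (p:ℤ) * ∏ j ∈ range (p-1), qint ((j:ℤ) + 1) := by
    obtain ⟨m, rfl⟩ : ∃ m, p = m + 1 := ⟨p - 1, by omega⟩
    rw [qfact, qfact_eq]
    simp only [Nat.add_sub_cancel]
    push_cast
    ring
  have hevc : ev Fq qu (AddMonoidAlgebra.ofCoeff c) = c.sum fun i a => algebraMap ℂ Fq a * q ^ i := by
    rw [ev_apply]
    simp only [qu_val]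
  have E1 : ev Fq qu (AddMonoidAlgebra.ofCoeff c) * qfact p = ∏ i ∈ range p, qint (n - i) := by
    rw [hevc, ← hc, hζ, div_mul_cancel₀ _ hfacne]
  have E2 : ev Fq qu (AddMonoidAlgebra.ofCoeff c) * (∏ j ∈ range (p-1), qint ((j:ℤ) + 1)) * qint (p:ℤ)
      = ev Fq qu (lrep p n₁) * (∏ i ∈ (range p).erase k, qint (n - i)) * qint (p:ℤ) := by
    have h := E1
    rw [hfact2, hprod, hqpn] at h
    linear_combination h
  have E3 := mul_right_cancel₀ hqp_ne E2
  simp only [qint_eq_ev] at E3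
  rw [← map_prod, ← map_prod, ← map_mul, ← map_mul] at E3
  have hR := ev_q_injective E3
  have E6 := congrArg (ev ℂ εu) hR
  rw [map_mul, map_mul, map_prod, map_prod, hlrp] at E6
  -- helpers for mod-p reindexing
  have hmodlt : ∀ x : ℤ, x % (p:ℤ) < p := fun x => Int.emod_lt_of_pos x hp0
  have hmodge : ∀ x : ℤ, 0 ≤ x % (p:ℤ) := fun x => Int.emod_nonneg x (by omega)
  have hdvdsub : ∀ x : ℤ, (p:ℤ) ∣ x - x % p := fun x => ⟨x / p, by rw [Int.emod_def]; ring⟩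
  have hmodinj : ∀ x y : ℤ, 0 ≤ y → y < p → (p:ℤ) ∣ x - y → x % p = y := by
    intro x y hy0 hy1 hd
    have h2 : y ≡ x [ZMOD (p:ℤ)] := Int.modEq_iff_dvd.mpr hd
    rw [Int.ModEq] at h2
    rw [← h2, Int.emod_eq_of_lt hy0 hy1]
  have hne0 : ∀ i : ℕ, i ∈ (range p).erase k → ((k:ℤ) - i) % p ≠ 0 := by
    intro i hi h0
    have hik := (Finset.mem_erase.mp hi).1
    have hir := mem_range.mp (Finset.mem_erase.mp hi).2
    have hd : (p:ℤ) ∣ (k:ℤ) - i := by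
      have := hdvdsub ((k:ℤ) - i)
      rwa [h0, sub_zero] at this
    have hkp : k < p := mem_range.mp hkmem
    have h2 : (k:ℤ) - i = 0 := int_dvd_eq_zero hp0 (by push_cast; omega) (by push_cast; omega) hd
    exact hik (by omega)
  have hreindex : (∏ i ∈ (range p).erase k, ev ℂ εu (lrep 1 (n - i)))
      = ∏ j ∈ range (p-1), ev ℂ εu (lrep 1 ((j:ℤ) + 1)) := by
    refine Finset.prod_bij' (fun i _ => ((((k:ℤ) - i) % p).toNat - 1))
      (fun j _ => (((k:ℤ) - ((j:ℤ)+1)) % p).toNat) ?_ ?_ ?_ ?_ ?_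
    · intro i hi
      have h0 := hne0 i hi
      have hge := hmodge ((k:ℤ) - i)
      have hl := hmodlt ((k:ℤ) - i)
      exact mem_range.mpr (by omega)
    · intro j hj
      have hjr := mem_range.mp hj
      have hge := hmodge ((k:ℤ) - ((j:ℤ)+1))
      have hl := hmodlt ((k:ℤ) - ((j:ℤ)+1))
      refine Finset.mem_erase.mpr ⟨?_, mem_range.mpr (by omega)⟩
      intro hEq
      have hE2 : ((k:ℤ) - ((j:ℤ)+1)) % p = k := by omega
      have hd := hdvdsub ((k:ℤ) - ((j:ℤ)+1))
      rw [hE2] at hd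
      have hd2 : (p:ℤ) ∣ (j:ℤ) + 1 := by
        have he : (k:ℤ) - ((j:ℤ)+1) - k = -((j:ℤ)+1) := by ring
        rwa [he, dvd_neg] at hd
      have h3 := Int.le_of_dvd (by positivity) hd2
      omega
    · intro i hi
      have h0 := hne0 i hi
      have hge := hmodge ((k:ℤ) - i)
      have hl := hmodlt ((k:ℤ) - i)
      have hir := mem_range.mp (Finset.mem_erase.mp hi).2
      have ha : ((((((k:ℤ) - i) % p).toNat - 1 : ℕ)) : ℤ) + 1 = ((k:ℤ) - i) % p := by omega
      have h1 : ((k:ℤ) - (((((((k:ℤ) - i) % p).toNat - 1 : ℕ)) : ℤ) + 1)) % p = i := by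
        apply hmodinj _ _ (by positivity) (by exact_mod_cast hir)
        rw [ha, show (k:ℤ) - ((k:ℤ)-↑i) % ↑p - ↑i = ((k:ℤ)-↑i) - ((k:ℤ)-↑i) % ↑p by ring]
        exact hdvdsub _
      omega
    · intro j hj
      have hjr := mem_range.mp hj
      have h1 : ((k:ℤ) - ((((k:ℤ) - ((j:ℤ)+1)) % p).toNat : ℤ)) % p = (j:ℤ) + 1 := by
        apply hmodinj _ _ (by positivity) (by push_cast; omega)
        rw [Int.toNat_of_nonneg (hmodge ((k:ℤ) - ((j:ℤ)+1))),
          show (k:ℤ) - ((k:ℤ) - ((j:ℤ)+1)) % ↑p - ((j:ℤ)+1)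
            = ((k:ℤ) - ((j:ℤ)+1)) - ((k:ℤ) - ((j:ℤ)+1)) % ↑p by ring]
        exact hdvdsub _
      omega
    · intro i hi
      have h0 := hne0 i hi
      have hge := hmodge ((k:ℤ) - i)
      have hl := hmodlt ((k:ℤ) - i)
      apply hDcongr
      have ha : ((((((k:ℤ) - i) % p).toNat - 1 : ℕ)) : ℤ) + 1 = ((k:ℤ) - i) % p := by omega
      rw [ha]
      have h2 : (p:ℤ) ∣ n - (k:ℤ) := ⟨n₁, by linear_combination -hdiv - hkk⟩
      rw [show n - ↑i - ((k:ℤ)-↑i) % ↑p = (n - ↑k) + (((k:ℤ)-↑i) - ((k:ℤ)-↑i) % ↑p) by ring]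
      exact dvd_add h2 (hdvdsub _)
  rw [hreindex] at E6
  have hprodne : (∏ j ∈ range (p-1), ev ℂ εu (lrep 1 ((j:ℤ) + 1))) ≠ 0 := by
    refine Finset.prod_ne_zero_iff.mpr fun j hj => hD_ne _ (by positivity) ?_
    have := mem_range.mp hj
    push_cast
    omega
  have hfinal : ev ℂ εu (AddMonoidAlgebra.ofCoeff c) = (n₁ : ℂ) := mul_right_cancel₀ hprodne E6
  have hevc' : ev ℂ εu (AddMonoidAlgebra.ofCoeff c) = c.sum fun i a => a * ε ^ i := by
    rw [ev_apply]
    apply Finsupp.sum_congr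
    intro i _
    rw [hεuv, Algebra.algebraMap_self_apply]
  rw [← hevc', hfinal, hn₁]
  rfl
end
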